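/- arXiv:1205.5231 — 3 statements merged into one kernel-verified Lean document; each statement's English description precedes it below -/
import Mathlib

section
/- Let ρ be a subnormalized density operator (ρ ≥ 0, tr ρ ≤ 1) on a finite-dimensional Hilbert space and Π an orthogonal projector with orthogonal complement Π^⊥ = I - Π. Then the purified distance satisfies P(ΠρΠ, ρ) ≤ √(2 tr[Π^⊥ ρ] - (tr[Π^⊥ ρ])²). -/
open Matrix Kronecker ComplexOrder

noncomputable section


open scoped Classical
namespace QIT

/-- Square root of a positive semidefinite matrix (junk value `0` otherwise). -/
noncomputable def msqrt {n : Type*} [Fintype n] [DecidableEq n] (A : Matrix n n ℂ) :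
    Matrix n n ℂ :=
  if h : A.PosSemidef then
    (h.1.eigenvectorUnitary : Matrix n n ℂ) * diagonal ((↑) ∘ Real.sqrt ∘ h.1.eigenvalues) *
      (star h.1.eigenvectorUnitary : Matrix n n ℂ)
  else 0

/-- Trace norm `‖A‖₁ = tr √(Aᴴ A)`. -/
noncomputable def traceNorm {n : Type*} [Fintype n] [DecidableEq n] (A : Matrix n n ℂ) : ℝ :=
  ((msqrt (Aᴴ * A)).trace).re

/-- Fidelity `F(ρ,σ) = ‖√ρ √σ‖₁`. -/
noncomputable def fidelity {n : Type*} [Fintype n] [DecidableEq n] (ρ σ : Matrix n n ℂ) : ℝ :=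
  traceNorm (msqrt ρ * msqrt σ)

/-- Generalized fidelity. -/
noncomputable def gFid {n : Type*} [Fintype n] [DecidableEq n] (ρ σ : Matrix n n ℂ) : ℝ :=
  fidelity ρ σ + Real.sqrt ((1 - ρ.trace.re) * (1 - σ.trace.re))

/-- Purified distance. -/
noncomputable def pDist {n : Type*} [Fintype n] [DecidableEq n] (ρ σ : Matrix n n ℂ) : ℝ :=
  Real.sqrt (1 - (gFid ρ σ) ^ 2)

/-- Subnormalized density operator. -/
def SubNormalized {n : Type*} [Fintype n] (ρ : Matrix n n ℂ) : Prop :=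
  ρ.PosSemidef ∧ ρ.trace.re ≤ 1

/-- Loewner order `A ≤ B`. -/
def mLE {n : Type*} [Fintype n] (A B : Matrix n n ℂ) : Prop := (B - A).PosSemidef

/-- Functional calculus for Hermitian matrices (junk value `0` otherwise). -/
noncomputable def cfcHerm {n : Type*} [Fintype n] [DecidableEq n] (A : Matrix n n ℂ)
    (f : ℝ → ℝ) : Matrix n n ℂ :=
  if hA : A.IsHermitian then
    (hA.eigenvectorUnitary : Matrix n n ℂ) *
      Matrix.diagonal (fun i => (f (hA.eigenvalues i) : ℂ)) *
      (star ((hA.eigenvectorUnitary : Matrix n n ℂ)))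
  else 0

/-- Projector onto the strictly negative eigenspaces of a Hermitian matrix. -/
noncomputable def negProj {n : Type*} [Fintype n] [DecidableEq n] (A : Matrix n n ℂ) :
    Matrix n n ℂ :=
  cfcHerm A (fun x => if x < 0 then 1 else 0)

/-- Projector onto the nonnegative eigenspaces of a Hermitian matrix. -/
noncomputable def posProj {n : Type*} [Fintype n] [DecidableEq n] (A : Matrix n n ℂ) :
    Matrix n n ℂ :=
  cfcHerm A (fun x => if 0 ≤ x then 1 else 0)

/-- Partial trace over the second (right) factor. -/
noncomputable def ptraceRight {a b : Type*} [Fintype a] [Fintype b]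
    (M : Matrix (a × b) (a × b) ℂ) : Matrix a a ℂ :=
  Matrix.of fun i j => ∑ k, M (i, k) (j, k)

/-- Partial trace over the first (left) factor. -/
noncomputable def ptraceLeft {a b : Type*} [Fintype a] [Fintype b]
    (M : Matrix (a × b) (a × b) ℂ) : Matrix b b ℂ :=
  Matrix.of fun i j => ∑ k, M (k, i) (k, j)

/-- Conditional min-entropy `H_min(A|B)_ρ`, conditioning on the second factor. -/
noncomputable def Hmin {a b : Type*} [Fintype a] [Fintype b] [DecidableEq a] [DecidableEq b]
    (ρ : Matrix (a × b) (a × b) ℂ) : ℝ :=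
  sSup {l : ℝ | ∃ σ : Matrix b b ℂ, SubNormalized σ ∧
    mLE ρ ((((2 : ℝ) ^ (-l) : ℝ)) • ((1 : Matrix a a ℂ) ⊗ₖ σ))}

/-- Relative conditional max-entropy `H_max(A|B)_{ρ|σ}`. -/
noncomputable def HmaxRel {a b : Type*} [Fintype a] [Fintype b] [DecidableEq a] [DecidableEq b]
    (ρ : Matrix (a × b) (a × b) ℂ) (σ : Matrix b b ℂ) : ℝ :=
  Real.logb 2 ((fidelity ρ ((1 : Matrix a a ℂ) ⊗ₖ σ)) ^ 2)

/-- Conditional max-entropy `H_max(A|B)_ρ`. -/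
noncomputable def Hmax {a b : Type*} [Fintype a] [Fintype b] [DecidableEq a] [DecidableEq b]
    (ρ : Matrix (a × b) (a × b) ℂ) : ℝ :=
  sSup {x : ℝ | ∃ σ : Matrix b b ℂ, SubNormalized σ ∧ x = HmaxRel ρ σ}

/-- Smooth conditional min-entropy. -/
noncomputable def sHmin {a b : Type*} [Fintype a] [Fintype b] [DecidableEq a] [DecidableEq b]
    (ε : ℝ) (ρ : Matrix (a × b) (a × b) ℂ) : ℝ :=
  sSup {x : ℝ | ∃ ρ' : Matrix (a × b) (a × b) ℂ,
    SubNormalized ρ' ∧ pDist ρ' ρ ≤ ε ∧ x = Hmin ρ'}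

/-- Smooth conditional max-entropy. -/
noncomputable def sHmax {a b : Type*} [Fintype a] [Fintype b] [DecidableEq a] [DecidableEq b]
    (ε : ℝ) (ρ : Matrix (a × b) (a × b) ℂ) : ℝ :=
  sInf {x : ℝ | ∃ ρ' : Matrix (a × b) (a × b) ℂ,
    SubNormalized ρ' ∧ pDist ρ' ρ ≤ ε ∧ x = Hmax ρ'}

/-- Operator norm of a Hermitian (in particular PSD) matrix: largest eigenvalue. -/
noncomputable def opNormPSD {n : Type*} [Fintype n] [DecidableEq n] (A : Matrix n n ℂ) : ℝ :=
  if hA : A.IsHermitian then ⨆ i, hA.eigenvalues i else 0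

end QIT

open QIT in
private lemma trace_re_nonneg' {n : Type*} [Fintype n] {A : Matrix n n ℂ}
    (hA : A.PosSemidef) : 0 ≤ A.trace.re := by
  rw [Matrix.trace, Complex.re_sum]
  refine Finset.sum_nonneg fun i _ => ?_
  have h := hA.re_dotProduct_nonneg (Pi.single i 1)
  simpa [Matrix.mulVec_single, dotProduct, Pi.single_apply,
    Finset.sum_ite_eq, Matrix.diag] using h

open scoped MatrixOrder in
open QIT in
private lemma msqrt_eq_cfc {n : Type*} [Fintype n] [DecidableEq n] {A : Matrix n n ℂ}
    (hA : A.PosSemidef) : msqrt A = CFC.sqrt A := by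
  rw [msqrt, dif_pos hA, CFC.sqrt_eq_cfc, cfc_nnreal_eq_real _ A, hA.1.cfc_eq]
  simp only [IsHermitian.cfc, Unitary.conjStarAlgAut_apply]
  congr 3
  funext i
  simp [Real.coe_toNNReal', max_eq_left (hA.eigenvalues_nonneg i)]

open scoped MatrixOrder in
open QIT in
/-- `P(ΠρΠ, ρ) ≤ √(2 tr[Π^⊥ ρ] - (tr[Π^⊥ ρ])²)` for a projector `Π`. -/
theorem stmt3 {n : Type*} [Fintype n] [DecidableEq n] (ρ P : Matrix n n ℂ)
    (hρ : SubNormalized ρ) (hP : P.IsHermitian) (hproj : P * P = P) :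
    pDist (P * ρ * P) ρ ≤
      Real.sqrt (2 * ((((1 - P) * ρ).trace).re) - ((((1 - P) * ρ).trace).re) ^ 2) := by
  obtain ⟨hρPSD, hρtr⟩ := hρ
  -- P and 1 - P are positive semidefinite
  have hPpsd : P.PosSemidef := by
    have h : P = Pᴴ * P := by rw [hP.eq, hproj]
    rw [h]; exact Matrix.posSemidef_conjTranspose_mul_self P
  have hQherm : (1 - P)ᴴ = 1 - P := by
    rw [Matrix.conjTranspose_sub, Matrix.conjTranspose_one, hP.eq]
  have hQsq : (1 - P) * (1 - P) = 1 - P := by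
    have h : (1 - P) * (1 - P) = 1 - P - P + P * P := by noncomm_ring
    rw [h, hproj]; abel
  have hQpsd : (1 - P).PosSemidef := by
    have h : (1 - P) = (1 - P)ᴴ * (1 - P) := by rw [hQherm, hQsq]
    rw [h]; exact Matrix.posSemidef_conjTranspose_mul_self _
  -- PρP is positive semidefinite
  have hPρP : (P * ρ * P).PosSemidef := by
    have h := hρPSD.mul_mul_conjTranspose_same P
    rwa [hP.eq] at h
  set Y := CFC.sqrt ρ with hYdef
  have hYpsd : Y.PosSemidef := Matrix.nonneg_iff_posSemidef.mp (CFC.sqrt_nonneg ρ)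
  have hYY : Y * Y = ρ := CFC.sqrt_mul_sqrt_self ρ hρPSD.nonneg
  set X := CFC.sqrt (P * ρ * P) with hXdef
  have hXpsd : X.PosSemidef := Matrix.nonneg_iff_posSemidef.mp (CFC.sqrt_nonneg _)
  have hXX : X * X = P * ρ * P := CFC.sqrt_mul_sqrt_self _ hPρP.nonneg
  set N := Y * P * Y with hNdef
  have hNpsd : N.PosSemidef := by
    have h := hPpsd.conjTranspose_mul_mul_same Y
    rwa [hYpsd.1.eq] at h
  have hAA : (X * Y)ᴴ * (X * Y) = N ^ 2 := by
    have e1 : (X * Y)ᴴ = Y * X := by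
      rw [Matrix.conjTranspose_mul, hYpsd.1.eq, hXpsd.1.eq]
    have e2 : Y * X * (X * Y) = Y * (X * X) * Y := by noncomm_ring
    have e3 : (Y * P * Y) ^ 2 = Y * P * (Y * Y) * (P * Y) := by noncomm_ring
    rw [e1, e2, hXX, hNdef, e3, hYY]
    noncomm_ring
  have hAApsd : ((X * Y)ᴴ * (X * Y)).PosSemidef :=
    Matrix.posSemidef_conjTranspose_mul_self _
  have hNsqrt : N = CFC.sqrt ((X * Y)ᴴ * (X * Y)) :=
    ((CFC.sqrt_eq_iff _ _ hAApsd.nonneg hNpsd.nonneg).mpr (by rw [hAA, sq])).symm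
  -- trace identities
  have htrN : N.trace = (P * ρ).trace := by
    rw [hNdef, Matrix.trace_mul_comm (Y * P) Y, ← mul_assoc, hYY, Matrix.trace_mul_comm]
  have htrPρP : (P * ρ * P).trace = (P * ρ).trace := by
    rw [Matrix.trace_mul_comm (P * ρ) P, ← mul_assoc, hproj]
  have htrQ : ((1 - P) * ρ).trace = ρ.trace - (P * ρ).trace := by
    rw [Matrix.sub_mul, Matrix.one_mul, Matrix.trace_sub]
  -- fidelity computation
  have hfid : fidelity (P * ρ * P) ρ = ((P * ρ).trace).re := by
    rw [fidelity, msqrt_eq_cfc hPρP, msqrt_eq_cfc hρPSD, traceNorm,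
      msqrt_eq_cfc hAApsd, ← hNsqrt, htrN]
  set s : ℝ := ρ.trace.re with hsdef
  set p : ℝ := ((P * ρ).trace).re with hpdef
  have hεval : (((1 - P) * ρ).trace).re = s - p := by
    rw [htrQ, Complex.sub_re]
  -- nonnegativity facts
  have hp0 : 0 ≤ p := by
    rw [hpdef, ← htrN]; exact trace_re_nonneg' hNpsd
  have hε0 : 0 ≤ s - p := by
    rw [← hεval]
    have hQN : (Y * (1 - P) * Y).PosSemidef := by
      have h := hQpsd.conjTranspose_mul_mul_same Y
      rwa [hYpsd.1.eq] at h
    have htr2 : (Y * (1 - P) * Y).trace = ((1 - P) * ρ).trace := by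
      rw [Matrix.trace_mul_comm (Y * (1 - P)) Y, ← mul_assoc, hYY, Matrix.trace_mul_comm]
    rw [← htr2]; exact trace_re_nonneg' hQN
  have hs1 : s ≤ 1 := hρtr
  -- the generalized fidelity
  have hgfid : gFid (P * ρ * P) ρ = p + Real.sqrt ((1 - p) * (1 - s)) := by
    rw [gFid, hfid, htrPρP]
  set q : ℝ := Real.sqrt ((1 - p) * (1 - s)) with hqdef
  have hq1 : 1 - s ≤ q := by
    have h1 : (1 - s) * (1 - s) ≤ (1 - p) * (1 - s) := by nlinarith
    calc 1 - s = Real.sqrt ((1 - s) * (1 - s)) := by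
          rw [Real.sqrt_mul_self (by linarith)]
      _ ≤ q := Real.sqrt_le_sqrt h1
  rw [pDist, hgfid, hεval]
  apply Real.sqrt_le_sqrt
  nlinarith [mul_nonneg (by linarith : (0:ℝ) ≤ q - (1 - s))
    (by linarith : (0:ℝ) ≤ q + (1 - s) + 2 * p)]
end
end

section
/- If ρ, σ are subnormalized density operators on H, H' ≅ H, and ρ̄ on H ⊗ H' is an extension of ρ (i.e., tr_{H'} ρ̄ = ρ), then there exists an extension σ̄ on H ⊗ H' of σ such that P(ρ̄, σ̄) = P(ρ, σ). -/
open Matrix Kronecker ComplexOrder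

noncomputable section


open scoped Classical
namespace UP
open QIT

variable {l m n : Type*} [Fintype l] [Fintype m] [Fintype n]
  [DecidableEq l] [DecidableEq m] [DecidableEq n]

open QIT

variable {l m n : Type*} [Fintype l] [Fintype m] [Fintype n]
  [DecidableEq l] [DecidableEq m] [DecidableEq n]

lemma msqrt_eq {A : Matrix n n ℂ} (hA : A.PosSemidef) : msqrt A =
    (hA.1.eigenvectorUnitary : Matrix n n ℂ) * diagonal ((↑) ∘ Real.sqrt ∘ hA.1.eigenvalues) *
      (star hA.1.eigenvectorUnitary : Matrix n n ℂ) := dif_pos hA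

lemma msqrt_posSemidef {A : Matrix n n ℂ} (hA : A.PosSemidef) : (msqrt A).PosSemidef := by
  rw [msqrt_eq hA]
  have hD : (diagonal ((↑) ∘ Real.sqrt ∘ hA.1.eigenvalues) : Matrix n n ℂ).PosSemidef := by
    rw [posSemidef_diagonal_iff]
    intro i
    simp only [Function.comp_apply, Complex.zero_le_real]
    exact Real.sqrt_nonneg _
  exact hD.mul_mul_conjTranspose_same _

lemma msqrt_mul_self {A : Matrix n n ℂ} (hA : A.PosSemidef) : msqrt A * msqrt A = A := by
  rw [msqrt_eq hA]
  have hU : (star hA.1.eigenvectorUnitary : Matrix n n ℂ) *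
      (hA.1.eigenvectorUnitary : Matrix n n ℂ) = 1 := Unitary.coe_star_mul_self _
  conv_rhs => rw [hA.1.spectral_theorem, Unitary.conjStarAlgAut_apply]
  rw [show ∀ U D V : Matrix n n ℂ, U * D * V * (U * D * V) = U * (D * (V * U) * D) * V from
    fun _ _ _ => by simp only [Matrix.mul_assoc], hU, Matrix.mul_one, diagonal_mul_diagonal]
  congr 2
  congr 1
  funext i
  simp only [Function.comp_apply, ← Complex.ofReal_mul,
    Real.mul_self_sqrt (hA.eigenvalues_nonneg i)]
  rfl

lemma msqrt_herm {A : Matrix n n ℂ} (hA : A.PosSemidef) : (msqrt A)ᴴ = msqrt A :=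
  (msqrt_posSemidef hA).1

lemma trace_conjTranspose_mul (A B : Matrix m n ℂ) :
    (Aᴴ * B).trace = ∑ j, ∑ a, (starRingEnd ℂ) (A a j) * B a j := by
  simp [Matrix.trace, Matrix.diag, Matrix.mul_apply, Matrix.conjTranspose_apply]

lemma trace_self_re_nonneg (A : Matrix m n ℂ) : 0 ≤ ((Aᴴ * A).trace).re := by
  rw [trace_conjTranspose_mul]
  simp only [Complex.re_sum]
  refine Finset.sum_nonneg fun j _ => Finset.sum_nonneg fun a _ => ?_
  rw [mul_comm, Complex.mul_conj]
  simp only [Complex.ofReal_re]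
  exact Complex.normSq_nonneg _

lemma psd_trace_re_nonneg {A : Matrix n n ℂ} (hA : A.PosSemidef) : 0 ≤ (A.trace).re := by
  have h : A = (msqrt A)ᴴ * msqrt A := by rw [msqrt_herm hA, msqrt_mul_self hA]
  rw [h]; exact trace_self_re_nonneg _

/-- A matrix viewed as a Euclidean vector. -/
def vecE (A : Matrix m n ℂ) : EuclideanSpace ℂ (m × n) :=
  WithLp.toLp 2 (fun p : m × n => A p.1 p.2)

lemma trace_inner (A B : Matrix m n ℂ) :
    (Aᴴ * B).trace = (inner ℂ (vecE A) (vecE B) : ℂ) := by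
  rw [trace_conjTranspose_mul]
  simp only [PiLp.inner_apply, RCLike.inner_apply', vecE, PiLp.toLp_apply]
  rw [Fintype.sum_prod_type]
  exact Finset.sum_comm

lemma trace_cs (A B : Matrix m n ℂ) :
    ((Aᴴ * B).trace).re ≤
      Real.sqrt (((Aᴴ * A).trace).re) * Real.sqrt (((Bᴴ * B).trace).re) := by
  set uA : EuclideanSpace ℂ (m × n) := vecE A with huA
  set uB : EuclideanSpace ℂ (m × n) := vecE B with huB
  have hAB : (Aᴴ * B).trace = (inner ℂ uA uB : ℂ) := trace_inner A B
  have hAA : ((Aᴴ * A).trace).re = RCLike.re (inner ℂ uA uA : ℂ) := by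
    rw [trace_inner A A]; rfl
  have hBB : ((Bᴴ * B).trace).re = RCLike.re (inner ℂ uB uB : ℂ) := by
    rw [trace_inner B B]; rfl
  rw [hAB, hAA, hBB]
  calc RCLike.re (inner ℂ uA uB : ℂ) ≤ ‖(inner ℂ uA uB : ℂ)‖ := RCLike.re_le_norm _
    _ ≤ ‖uA‖ * ‖uB‖ := norm_inner_le_norm _ _
    _ = _ := by rw [norm_eq_sqrt_re_inner (𝕜 := ℂ) uA, norm_eq_sqrt_re_inner (𝕜 := ℂ) uB]


/-- Column of a matrix as a Euclidean vector. -/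
def colE (M : Matrix m n ℂ) (i : n) : EuclideanSpace ℂ m := WithLp.toLp 2 (fun a => M a i)

lemma inner_colE (M N : Matrix m n ℂ) (i j : n) :
    (inner ℂ (colE M i) (colE N j) : ℂ) = (Mᴴ * N) i j := by
  simp [colE, PiLp.inner_apply, RCLike.inner_apply', Matrix.mul_apply,
    Matrix.conjTranspose_apply, mul_comm]

lemma orthonormal_extension (hmn : Fintype.card n ≤ Fintype.card m)
    (S : Set n) (u : n → EuclideanSpace ℂ m) (hu : Orthonormal ℂ (S.restrict u)) :
    ∃ w : n → EuclideanSpace ℂ m, Orthonormal ℂ w ∧ ∀ i ∈ S, w i = u i := by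
  obtain ⟨e⟩ : Nonempty (n ↪ m) := Function.Embedding.nonempty_of_card_le hmn
  set v : m → EuclideanSpace ℂ m :=
    fun j => if hj : ∃ i, i ∈ S ∧ e i = j then u hj.choose else 0 with hv
  have hve : ∀ i ∈ S, v (e i) = u i := by
    intro i hi
    have hex : ∃ i', i' ∈ S ∧ e i' = e i := ⟨i, hi, rfl⟩
    have hch : hex.choose = i := e.injective hex.choose_spec.2
    simp only [hv, dif_pos hex, hch]
  have hOrth : Orthonormal ℂ ((e '' S).restrict v) := by
    rw [orthonormal_iff_ite] at hu ⊢
    rintro ⟨j₁, hj₁⟩ ⟨j₂, hj₂⟩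
    simp only [Set.restrict_apply, Subtype.mk.injEq]
    obtain ⟨i₁, hi₁, rfl⟩ := hj₁
    obtain ⟨i₂, hi₂, rfl⟩ := hj₂
    have := hu ⟨i₁, hi₁⟩ ⟨i₂, hi₂⟩
    change inner ℂ (u i₁) (u i₂) = _ at this
    change inner ℂ (v (e i₁)) (v (e i₂)) = _
    rw [hve i₁ hi₁, hve i₂ hi₂, this]
    simp only [Subtype.mk.injEq, e.injective.eq_iff]
  obtain ⟨b, hb⟩ := hOrth.exists_orthonormalBasis_extension_of_card_eq
    (finrank_euclideanSpace (𝕜 := ℂ) (ι := m))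
  refine ⟨fun i => b (e i), b.orthonormal.comp e e.injective, fun i hi => ?_⟩
  show b (e i) = u i
  rw [hb (e i) ⟨i, hi, rfl⟩, hve i hi]

/-- Polar decomposition with an isometry factor. -/
lemma exists_isometry_polar (T : Matrix m n ℂ) (hmn : Fintype.card n ≤ Fintype.card m) :
    ∃ J : Matrix m n ℂ, Jᴴ * J = 1 ∧ J * msqrt (Tᴴ * T) = T := by
  have hQ : (Tᴴ * T).PosSemidef := posSemidef_conjTranspose_mul_self T
  set hH : (Tᴴ * T).IsHermitian := hQ.1 with hHdef
  set V : Matrix n n ℂ := (hH.eigenvectorUnitary : Matrix n n ℂ) with hVdef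
  have hV1 : Vᴴ * V = 1 := by
    have := Matrix.mem_unitaryGroup_iff'.mp hH.eigenvectorUnitary.2
    rwa [Matrix.star_eq_conjTranspose] at this
  have hV2 : V * Vᴴ = 1 := by
    have := Matrix.mem_unitaryGroup_iff.mp hH.eigenvectorUnitary.2
    rwa [Matrix.star_eq_conjTranspose] at this
  set lam : n → ℝ := hH.eigenvalues with hlam
  have hlamnn : ∀ i, 0 ≤ lam i := fun i => hQ.eigenvalues_nonneg i
  have hspec : Vᴴ * (Tᴴ * T) * V = diagonal (fun i => (lam i : ℂ)) := by
    have := hH.conjStarAlgAut_star_eigenvectorUnitary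
    rw [Unitary.conjStarAlgAut_star_apply] at this
    rw [Matrix.star_eq_conjTranspose] at this
    exact this
  set M : Matrix m n ℂ := T * V with hM
  have hMM : Mᴴ * M = diagonal (fun i => (lam i : ℂ)) := by
    rw [hM, Matrix.conjTranspose_mul, ← hspec]
    simp only [Matrix.mul_assoc]
  have hMcol : ∀ i j, (∑ a, (starRingEnd ℂ) (M a i) * M a j) = diagonal (fun i => (lam i : ℂ)) i j := by
    intro i j
    rw [← hMM]
    simp [Matrix.mul_apply, Matrix.conjTranspose_apply]
  have hcol0 : ∀ i, lam i = 0 → ∀ a, M a i = 0 := by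
    intro i h0 a
    have h1 := hMcol i i
    rw [Matrix.diagonal_apply_eq, h0] at h1
    have h2 : (∑ a, Complex.normSq (M a i)) = 0 := by
      have := congrArg Complex.re h1
      simpa [Complex.re_sum, mul_comm, Complex.mul_conj, Complex.ofReal_re] using this
    have h3 := (Finset.sum_eq_zero_iff_of_nonneg
      (fun a _ => Complex.normSq_nonneg (M a i))).1 h2 a (Finset.mem_univ a)
    exact Complex.normSq_eq_zero.mp h3
  set S : Set n := {i | lam i ≠ 0} with hS
  set u : n → EuclideanSpace ℂ m :=
    fun i => ((Real.sqrt (lam i) : ℂ))⁻¹ • colE M i with hu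
  have huOrth : Orthonormal ℂ (S.restrict u) := by
    rw [orthonormal_iff_ite]
    rintro ⟨i, hi⟩ ⟨j, hj⟩
    show inner ℂ (u i) (u j) = _
    simp only [hu]
    rw [inner_smul_left, inner_smul_right]
    have hbase : (inner ℂ (colE M i) (colE M j) : ℂ) = diagonal (fun i => (lam i : ℂ)) i j := by
      rw [inner_colE, hMM]
    rw [hbase]
    by_cases hij : i = j
    · subst hij
      simp only [Matrix.diagonal_apply_eq, Subtype.mk.injEq, if_pos rfl]
      rw [map_inv₀, Complex.conj_ofReal]
      have hlpos : 0 < lam i := lt_of_le_of_ne (hlamnn i) (Ne.symm hi)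
      have hs : (0:ℝ) < Real.sqrt (lam i) := Real.sqrt_pos.mpr hlpos
      field_simp
      rw [if_pos trivial, mul_one, ← Complex.ofReal_pow, Real.sq_sqrt (hlamnn i)]
    · rw [Matrix.diagonal_apply_ne _ hij]
      simp only [Subtype.mk.injEq, if_neg hij, mul_zero]
  obtain ⟨w, hwOrth, hwS⟩ := orthonormal_extension hmn S u huOrth
  set F : Matrix m n ℂ := Matrix.of (fun a i => w i a) with hF
  have hFF : Fᴴ * F = 1 := by
    ext i j
    rw [orthonormal_iff_ite] at hwOrth
    have h1 := hwOrth i j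
    have hcolF : ∀ k, colE F k = w k := fun k => PiLp.ext fun a => rfl
    have h2 : (inner ℂ (colE F i) (colE F j) : ℂ) = inner ℂ (w i) (w j) := by
      rw [hcolF, hcolF]
    rw [← inner_colE, h2, h1]
    by_cases hij : i = j <;> simp [hij, Matrix.one_apply]
  have hsqrt : msqrt (Tᴴ * T) = V * diagonal (fun i => (Real.sqrt (lam i) : ℂ)) * Vᴴ := by
    rw [msqrt_eq hQ]
    rw [Matrix.star_eq_conjTranspose]
    rfl
  have hFD : F * diagonal (fun i => (Real.sqrt (lam i) : ℂ)) = M := by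
    ext a i
    rw [Matrix.mul_diagonal]
    by_cases hiS : lam i = 0
    · rw [hcol0 i hiS a]
      simp [hiS]
    · have hwi := hwS i hiS
      have : F a i = u i a := by rw [hF]; simp only [Matrix.of_apply, hwi]
      rw [this, hu]
      simp only [PiLp.smul_apply, smul_eq_mul]
      have hlpos : 0 < lam i := lt_of_le_of_ne (hlamnn i) (Ne.symm hiS)
      have hs : (Real.sqrt (lam i) : ℂ) ≠ 0 := by
        simpa using (Real.sqrt_pos.mpr hlpos).ne'
      have hc : colE M i a = M a i := rfl
      rw [hc]
      field_simp
  refine ⟨F * Vᴴ, ?_, ?_⟩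
  · rw [Matrix.conjTranspose_mul, Matrix.conjTranspose_conjTranspose]
    calc V * Fᴴ * (F * Vᴴ) = V * (Fᴴ * F) * Vᴴ := by simp only [Matrix.mul_assoc]
      _ = 1 := by rw [hFF, Matrix.mul_one, hV2]
  · rw [hsqrt]
    calc F * Vᴴ * (V * diagonal (fun i => (Real.sqrt (lam i) : ℂ)) * Vᴴ)
        = F * (Vᴴ * V) * diagonal (fun i => (Real.sqrt (lam i) : ℂ)) * Vᴴ := by
          simp only [Matrix.mul_assoc]
      _ = M * Vᴴ := by rw [hV1, Matrix.mul_one, hFD]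
      _ = T := by rw [hM, Matrix.mul_assoc, hV2, Matrix.mul_one]

/-- Trace-norm duality (easy direction): contraction test functionals. -/
lemma re_trace_mul_le_traceNorm (X C : Matrix n n ℂ) (hC : (1 - C * Cᴴ).PosSemidef) :
    ((X * C).trace).re ≤ traceNorm X := by
  obtain ⟨J, hJ1, hJ2⟩ := exists_isometry_polar X le_rfl
  have hJJ : J * Jᴴ = 1 := mul_eq_one_comm.mp hJ1
  set P : Matrix n n ℂ := msqrt (Xᴴ * X) with hPdef
  have hP : P.PosSemidef := msqrt_posSemidef (posSemidef_conjTranspose_mul_self X)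
  set R : Matrix n n ℂ := msqrt P with hRdef
  have hRH : Rᴴ = R := msqrt_herm hP
  have hRR : R * R = P := msqrt_mul_self hP
  have hXC : X * C = (R * Jᴴ)ᴴ * (R * C) := by
    rw [Matrix.conjTranspose_mul, Matrix.conjTranspose_conjTranspose, hRH]
    calc X * C = J * P * C := by rw [hJ2]
      _ = J * R * (R * C) := by rw [← hRR]; simp only [Matrix.mul_assoc]
  have hAA : (((R * Jᴴ)ᴴ * (R * Jᴴ)).trace).re = (P.trace).re := by
    rw [Matrix.conjTranspose_mul, Matrix.conjTranspose_conjTranspose, hRH]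
    have : J * R * (R * Jᴴ) = J * (R * R * Jᴴ) := by simp only [Matrix.mul_assoc]
    rw [this, Matrix.trace_mul_comm, hRR]
    have : P * Jᴴ * J = P * (Jᴴ * J) := by simp only [Matrix.mul_assoc]
    rw [Matrix.mul_assoc, hJ1, Matrix.mul_one]
  have hBB : (((R * C)ᴴ * (R * C)).trace).re ≤ (P.trace).re := by
    rw [Matrix.conjTranspose_mul, hRH]
    have h1 : Cᴴ * R * (R * C) = Cᴴ * (R * R * C) := by simp only [Matrix.mul_assoc]
    rw [h1, Matrix.trace_mul_comm, hRR]
    have h2 : P * C * Cᴴ = P * (C * Cᴴ) := by simp only [Matrix.mul_assoc]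
    rw [Matrix.mul_assoc]
    have h3 : (R * (1 - C * Cᴴ) * Rᴴ).PosSemidef := hC.mul_mul_conjTranspose_same R
    have h4 : R * (1 - C * Cᴴ) * Rᴴ = P - R * (C * Cᴴ) * Rᴴ := by
      rw [Matrix.mul_sub, Matrix.sub_mul, Matrix.mul_one, hRH, hRR]
    have h5 := psd_trace_re_nonneg h3
    rw [h4, Matrix.trace_sub, Complex.sub_re] at h5
    have h6 : (P * (C * Cᴴ)).trace = (R * (C * Cᴴ) * Rᴴ).trace := by
      rw [hRH, ← hRR, Matrix.mul_assoc, Matrix.mul_assoc, Matrix.trace_mul_comm]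
      simp only [Matrix.mul_assoc]
    rw [h6]
    linarith
  have hPnn : 0 ≤ (P.trace).re := psd_trace_re_nonneg hP
  have hBBnn : 0 ≤ (((R * C)ᴴ * (R * C)).trace).re := trace_self_re_nonneg _
  calc ((X * C).trace).re = (((R * Jᴴ)ᴴ * (R * C)).trace).re := by rw [hXC]
    _ ≤ Real.sqrt ((((R * Jᴴ)ᴴ * (R * Jᴴ)).trace).re) *
        Real.sqrt ((((R * C)ᴴ * (R * C)).trace).re) := trace_cs _ _
    _ ≤ Real.sqrt ((P.trace).re) * Real.sqrt ((P.trace).re) := by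
        rw [hAA]
        exact mul_le_mul_of_nonneg_left (Real.sqrt_le_sqrt hBB) (Real.sqrt_nonneg _)
    _ = (P.trace).re := Real.mul_self_sqrt hPnn

/-- Easy direction of Uhlmann's theorem: overlaps are bounded by the fidelity. -/
lemma re_trace_le_fidelity (M N : Matrix n m ℂ) (hmn : Fintype.card n ≤ Fintype.card m) :
    ((Mᴴ * N).trace).re ≤ fidelity (M * Mᴴ) (N * Nᴴ) := by
  obtain ⟨J, hJ1, hJ2⟩ := exists_isometry_polar Mᴴ hmn
  obtain ⟨K, hK1, hK2⟩ := exists_isometry_polar Nᴴ hmn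
  rw [Matrix.conjTranspose_conjTranspose] at hJ2 hK2
  have hN : N = msqrt (N * Nᴴ) * Kᴴ := by
    have := congrArg Matrix.conjTranspose hK2
    rw [Matrix.conjTranspose_mul, Matrix.conjTranspose_conjTranspose,
      msqrt_herm (posSemidef_self_mul_conjTranspose N)] at this
    exact this.symm
  have hC : (1 - (Kᴴ * J) * (Kᴴ * J)ᴴ).PosSemidef := by
    have hPr : (1 - J * Jᴴ).PosSemidef := by
      have hherm : (1 - J * Jᴴ)ᴴ = 1 - J * Jᴴ := by
        rw [Matrix.conjTranspose_sub, Matrix.conjTranspose_one, Matrix.conjTranspose_mul,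
          Matrix.conjTranspose_conjTranspose]
      have hidem : (1 - J * Jᴴ) * (1 - J * Jᴴ) = 1 - J * Jᴴ := by
        have : J * Jᴴ * (J * Jᴴ) = J * Jᴴ := by
          calc J * Jᴴ * (J * Jᴴ) = J * (Jᴴ * J) * Jᴴ := by simp only [Matrix.mul_assoc]
            _ = J * Jᴴ := by rw [hJ1, Matrix.mul_one]
        rw [Matrix.sub_mul, Matrix.mul_sub, Matrix.mul_sub, Matrix.one_mul, Matrix.mul_one, this]
        simp only [Matrix.one_mul]
        abel
      have : 1 - J * Jᴴ = (1 - J * Jᴴ)ᴴ * (1 - J * Jᴴ) := by rw [hherm, hidem]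
      rw [this]
      exact posSemidef_conjTranspose_mul_self _
    have := hPr.conjTranspose_mul_mul_same K
    have heq : Kᴴ * (1 - J * Jᴴ) * K = 1 - (Kᴴ * J) * (Kᴴ * J)ᴴ := by
      rw [Matrix.conjTranspose_mul, Matrix.conjTranspose_conjTranspose]
      rw [Matrix.mul_sub, Matrix.sub_mul, Matrix.mul_one, hK1]
      simp only [Matrix.mul_assoc]
    rwa [heq] at this
  have hkey : (Mᴴ * N).trace = ((msqrt (M * Mᴴ) * msqrt (N * Nᴴ)) * (Kᴴ * J)).trace := by
    conv_lhs => rw [← hJ2, hN]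
    have h1 : J * msqrt (M * Mᴴ) * (msqrt (N * Nᴴ) * Kᴴ)
        = J * (msqrt (M * Mᴴ) * (msqrt (N * Nᴴ) * Kᴴ)) := by simp only [Matrix.mul_assoc]
    rw [h1, Matrix.trace_mul_comm]
    simp only [Matrix.mul_assoc]
  rw [hkey]
  exact re_trace_mul_le_traceNorm _ _ hC

/-- A unitary achieving the trace norm. -/
lemma exists_unitary_traceNorm (A : Matrix n n ℂ) :
    ∃ U : Matrix n n ℂ, U * Uᴴ = 1 ∧ ((A * U).trace) = (msqrt (Aᴴ * A)).trace := by
  obtain ⟨J, hJ1, hJ2⟩ := exists_isometry_polar A le_rfl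
  refine ⟨Jᴴ, by rw [Matrix.conjTranspose_conjTranspose]; exact hJ1, ?_⟩
  conv_lhs => rw [← hJ2]
  rw [Matrix.mul_assoc, Matrix.trace_mul_comm, Matrix.mul_assoc, hJ1, Matrix.mul_one]

end UP

namespace UPresh
open QIT UP

variable {h : Type*} [Fintype h] [DecidableEq h]

/-- Reshape a matrix on `H ⊗ H'` into a rectangular matrix `H → H' ⊗ (H ⊗ H')`. -/
def resh (M : Matrix (h × h) (h × h) ℂ) : Matrix h (h × (h × h)) ℂ :=
  Matrix.of fun a bc => M (a, bc.1) bc.2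

/-- Inverse reshaping. -/
def unresh (X : Matrix h (h × (h × h)) ℂ) : Matrix (h × h) (h × h) ℂ :=
  Matrix.of fun ab c => X ab.1 (ab.2, c)

lemma resh_unresh (X : Matrix h (h × (h × h)) ℂ) : resh (unresh X) = X := by
  ext a bc
  rfl

lemma ptraceRight_mul_conjTranspose (M N : Matrix (h × h) (h × h) ℂ) :
    ptraceRight (M * Nᴴ) = resh M * (resh N)ᴴ := by
  ext i j
  simp only [ptraceRight, Matrix.of_apply, Matrix.mul_apply, Matrix.conjTranspose_apply,
    resh, Fintype.sum_prod_type]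

lemma trace_resh (M N : Matrix (h × h) (h × h) ℂ) :
    ((resh M)ᴴ * resh N).trace = (Mᴴ * N).trace := by
  rw [trace_inner, trace_inner]
  simp only [PiLp.inner_apply, RCLike.inner_apply, vecE]
  exact Fintype.sum_equiv (Equiv.prodAssoc h h (h × h)).symm _ _ (fun p => rfl)

lemma trace_ptraceRight (M : Matrix (h × h) (h × h) ℂ) :
    (ptraceRight M).trace = M.trace := by
  simp [ptraceRight, Matrix.trace, Matrix.diag, Fintype.sum_prod_type]

end UPresh


open UP UPresh in
open QIT in
/-- Extensions matching the purified distance. -/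
theorem stmt6 {h : Type*} [Fintype h] [DecidableEq h]
    (ρ σ : Matrix h h ℂ) (hρ : SubNormalized ρ) (hσ : SubNormalized σ)
    (ρbar : Matrix (h × h) (h × h) ℂ) (hbar : ρbar.PosSemidef)
    (hext : ptraceRight ρbar = ρ) :
    ∃ σbar : Matrix (h × h) (h × h) ℂ, σbar.PosSemidef ∧ ptraceRight σbar = σ ∧
      pDist ρbar σbar = pDist ρ σ := by
  classical
  obtain ⟨hρPSD, -⟩ := hρ
  obtain ⟨hσPSD, -⟩ := hσ
  have hcard : Fintype.card h ≤ Fintype.card (h × (h × h)) := by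
    simp only [Fintype.card_prod]
    rcases Nat.eq_zero_or_pos (Fintype.card h) with h0 | h0
    · simp [h0]
    · exact Nat.le_mul_of_pos_right _ (Nat.mul_pos h0 h0)
  set Ψ : Matrix (h × h) (h × h) ℂ := msqrt ρbar with hΨdef
  have hΨH : Ψᴴ = Ψ := msqrt_herm hbar
  have hΨΨ : Ψ * Ψᴴ = ρbar := by rw [hΨH]; exact msqrt_mul_self hbar
  have hρeq : resh Ψ * (resh Ψ)ᴴ = ρ := by
    rw [← ptraceRight_mul_conjTranspose, hΨΨ, hext]
  obtain ⟨J, hJ1, hJ2⟩ := exists_isometry_polar (resh Ψ)ᴴ hcard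
  rw [Matrix.conjTranspose_conjTranspose, hρeq] at hJ2
  obtain ⟨U, hU, hAU⟩ := exists_unitary_traceNorm (msqrt ρ * msqrt σ)
  set Nt : Matrix h (h × (h × h)) ℂ := msqrt σ * U * Jᴴ with hNtdef
  set N : Matrix (h × h) (h × h) ℂ := unresh Nt with hNdef
  have hreshN : resh N = Nt := resh_unresh Nt
  have hNtNt : Nt * Ntᴴ = σ := by
    rw [hNtdef]
    rw [Matrix.conjTranspose_mul, Matrix.conjTranspose_mul,
      Matrix.conjTranspose_conjTranspose, msqrt_herm hσPSD]
    calc msqrt σ * U * Jᴴ * (J * (Uᴴ * msqrt σ))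
        = msqrt σ * U * (Jᴴ * J) * Uᴴ * msqrt σ := by simp only [Matrix.mul_assoc]
      _ = σ := by rw [hJ1, Matrix.mul_one, Matrix.mul_assoc (msqrt σ), hU, Matrix.mul_one,
            msqrt_mul_self hσPSD]
  have hσbarPSD : (N * Nᴴ).PosSemidef := posSemidef_self_mul_conjTranspose N
  have hptr : ptraceRight (N * Nᴴ) = σ := by
    rw [ptraceRight_mul_conjTranspose, hreshN, hNtNt]
  refine ⟨N * Nᴴ, hσbarPSD, hptr, ?_⟩
  -- the overlap equals the fidelity of ρ and σ
  have hoverlap : ((Ψᴴ * N).trace).re = fidelity ρ σ := by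
    have h1 : (Ψᴴ * N).trace = ((resh Ψ)ᴴ * resh N).trace := (trace_resh Ψ N).symm
    have h2 : (resh Ψ)ᴴ * resh N = J * msqrt ρ * (msqrt σ * U * Jᴴ) := by
      rw [← hJ2, hreshN]
    have h3 : ((resh Ψ)ᴴ * resh N).trace = ((msqrt ρ * msqrt σ * U).trace) := by
      rw [h2]
      have h4 : J * msqrt ρ * (msqrt σ * U * Jᴴ)
          = J * (msqrt ρ * (msqrt σ * U * Jᴴ)) := by simp only [Matrix.mul_assoc]
      rw [h4, Matrix.trace_mul_comm]
      have h5 : msqrt ρ * (msqrt σ * U * Jᴴ) * J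
          = msqrt ρ * msqrt σ * U * (Jᴴ * J) := by simp only [Matrix.mul_assoc]
      rw [h5, hJ1, Matrix.mul_one]
    rw [h1, h3, hAU]
    rfl
  -- fidelity ρ σ ≤ fidelity ρbar σbar
  have hge : fidelity ρ σ ≤ fidelity ρbar (N * Nᴴ) := by
    have := re_trace_le_fidelity Ψ N le_rfl
    rw [hΨΨ, hoverlap] at this
    exact this
  -- fidelity ρbar σbar ≤ fidelity ρ σ
  have hle : fidelity ρbar (N * Nᴴ) ≤ fidelity ρ σ := by
    obtain ⟨J₃, hJ₃1, hJ₃2⟩ := exists_isometry_polar (msqrt ρbar * msqrt (N * Nᴴ)) le_rfl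
    have hJ₃J₃ : J₃ * J₃ᴴ = 1 := mul_eq_one_comm.mp hJ₃1
    set M' : Matrix (h × h) (h × h) ℂ := msqrt ρbar * J₃ with hM'def
    set N' : Matrix (h × h) (h × h) ℂ := msqrt (N * Nᴴ) with hN'def
    have hM'M' : M' * M'ᴴ = ρbar := by
      rw [hM'def, Matrix.conjTranspose_mul, msqrt_herm hbar]
      calc msqrt ρbar * J₃ * (J₃ᴴ * msqrt ρbar)
          = msqrt ρbar * (J₃ * J₃ᴴ) * msqrt ρbar := by simp only [Matrix.mul_assoc]
        _ = ρbar := by rw [hJ₃J₃, Matrix.mul_one, msqrt_mul_self hbar]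
    have hN'N' : N' * N'ᴴ = N * Nᴴ := by
      rw [hN'def, msqrt_herm hσbarPSD, msqrt_mul_self hσbarPSD]
    have hfidbar : fidelity ρbar (N * Nᴴ) = ((M'ᴴ * N').trace).re := by
      have h6 : M'ᴴ * N' = J₃ᴴ * (msqrt ρbar * msqrt (N * Nᴴ)) := by
        rw [hM'def, hN'def, Matrix.conjTranspose_mul, msqrt_herm hbar]
        simp only [Matrix.mul_assoc]
      have h7 : J₃ᴴ * (msqrt ρbar * msqrt (N * Nᴴ))
          = msqrt ((msqrt ρbar * msqrt (N * Nᴴ))ᴴ * (msqrt ρbar * msqrt (N * Nᴴ))) := by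
        conv_lhs => rw [← hJ₃2]
        rw [← Matrix.mul_assoc, hJ₃1, Matrix.one_mul]
      rw [h6, h7]
      rfl
    have h8 := re_trace_le_fidelity (resh M') (resh N') hcard
    have h9 : ((resh M')ᴴ * resh N').trace = (M'ᴴ * N').trace := trace_resh M' N'
    have h10 : resh M' * (resh M')ᴴ = ρ := by
      rw [← ptraceRight_mul_conjTranspose, hM'M', hext]
    have h11 : resh N' * (resh N')ᴴ = σ := by
      rw [← ptraceRight_mul_conjTranspose, hN'N', hptr]
    rw [h9, h10, h11] at h8
    rw [hfidbar]
    exact h8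
  have hfid : fidelity ρbar (N * Nᴴ) = fidelity ρ σ := le_antisymm hle hge
  have htrρ : ρbar.trace = ρ.trace := by rw [← hext, trace_ptraceRight]
  have htrσ : (N * Nᴴ).trace = σ.trace := by rw [← hptr, trace_ptraceRight]
  unfold pDist gFid
  rw [hfid, htrρ, htrσ]
end
end

section
/- For subnormalized ρ_{AB} and σ_B and 0 ≤ λ, if P⁺ and P⁻ are the projectors onto the nonnegative and strictly negative eigenspaces of ρ_{AB} - 2^{-λ} (id_A ⊗ σ_B), then ‖√ρ_{AB} √(id_A⊗σ_B)‖₁ · 2^{-λ/2} ≥ tr[P⁻ ρ_{AB}]. -/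
open Matrix Kronecker ComplexOrder

noncomputable section


open scoped Classical
namespace QIT

variable {n : Type*} [Fintype n] [DecidableEq n]

lemma cfcHerm_of_isHermitian {A : Matrix n n ℂ} (hA : A.IsHermitian) (f : ℝ → ℝ) :
    cfcHerm A f = (hA.eigenvectorUnitary : Matrix n n ℂ) *
      Matrix.diagonal (fun i => (f (hA.eigenvalues i) : ℂ)) *
      (star ((hA.eigenvectorUnitary : Matrix n n ℂ))) := dif_pos hA

lemma cfcHerm_mul {A : Matrix n n ℂ} (hA : A.IsHermitian) (f g : ℝ → ℝ) :
    cfcHerm A f * cfcHerm A g = cfcHerm A (fun x => f x * g x) := by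
  set U := (hA.eigenvectorUnitary : Matrix n n ℂ) with hU
  have h1 : (star U) * U = 1 := Unitary.coe_star_mul_self hA.eigenvectorUnitary
  rw [cfcHerm_of_isHermitian hA, cfcHerm_of_isHermitian hA, cfcHerm_of_isHermitian hA]
  simp only [Matrix.mul_assoc]
  rw [show (star U) * (U * (Matrix.diagonal (fun i => (g (hA.eigenvalues i) : ℂ)) * star U))
      = Matrix.diagonal (fun i => (g (hA.eigenvalues i) : ℂ)) * star U by
    rw [← Matrix.mul_assoc, h1, Matrix.one_mul]]
  rw [← Matrix.mul_assoc (Matrix.diagonal _), Matrix.diagonal_mul_diagonal]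
  push_cast
  rfl

lemma cfcHerm_id {A : Matrix n n ℂ} (hA : A.IsHermitian) :
    cfcHerm A (fun x => x) = A := by
  rw [cfcHerm_of_isHermitian hA]
  exact hA.spectral_theorem.symm

lemma cfcHerm_one {A : Matrix n n ℂ} (hA : A.IsHermitian) :
    cfcHerm A (fun _ => 1) = 1 := by
  rw [cfcHerm_of_isHermitian hA]
  have h1 : (hA.eigenvectorUnitary : Matrix n n ℂ) * star (hA.eigenvectorUnitary : Matrix n n ℂ) = 1 :=
    Unitary.coe_mul_star_self hA.eigenvectorUnitary
  simp only [Complex.ofReal_one, Matrix.diagonal_one, Matrix.mul_one, h1]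

lemma cfcHerm_sub {A : Matrix n n ℂ} (hA : A.IsHermitian) (f g : ℝ → ℝ) :
    cfcHerm A (fun x => f x - g x) = cfcHerm A f - cfcHerm A g := by
  rw [cfcHerm_of_isHermitian hA, cfcHerm_of_isHermitian hA, cfcHerm_of_isHermitian hA]
  rw [← Matrix.sub_mul, ← Matrix.mul_sub]
  congr 2
  ext i j
  by_cases h : i = j <;> simp [Matrix.diagonal, h]

lemma cfcHerm_posSemidef {A : Matrix n n ℂ} (hA : A.IsHermitian) {f : ℝ → ℝ}
    (hf : ∀ x, 0 ≤ f x) : (cfcHerm A f).PosSemidef := by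
  rw [cfcHerm_of_isHermitian hA]
  have hd : (Matrix.diagonal fun i => (f (hA.eigenvalues i) : ℂ)).PosSemidef :=
    Matrix.posSemidef_diagonal_iff.mpr fun i => by
      rw [show ((0:ℂ)) = ((0:ℝ):ℂ) by norm_num]
      exact Complex.real_le_real.mpr (hf (hA.eigenvalues i))
  have := hd.mul_mul_conjTranspose_same (hA.eigenvectorUnitary : Matrix n n ℂ)
  rwa [Matrix.star_eq_conjTranspose] 

lemma trace_cfcHerm_mul {A : Matrix n n ℂ} (hA : A.IsHermitian) (f : ℝ → ℝ) (M : Matrix n n ℂ) :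
    (cfcHerm A f * M).trace =
      ∑ i, (f (hA.eigenvalues i) : ℂ) *
        ((star (hA.eigenvectorUnitary : Matrix n n ℂ) * M *
          (hA.eigenvectorUnitary : Matrix n n ℂ)) i i) := by
  set U := (hA.eigenvectorUnitary : Matrix n n ℂ)
  rw [cfcHerm_of_isHermitian hA]
  have : U * Matrix.diagonal (fun i => (f (hA.eigenvalues i) : ℂ)) * star U * M
      = U * (Matrix.diagonal (fun i => (f (hA.eigenvalues i) : ℂ)) * (star U * M)) := by
    simp only [Matrix.mul_assoc]
  rw [this, Matrix.trace_mul_comm U, Matrix.trace]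
  simp [Matrix.diag, Matrix.diagonal_mul, Matrix.mul_assoc]

lemma _root_.Matrix.IsHermitian.star_mul_self_mul_eq_diagonal {A : Matrix n n ℂ}
    (hA : A.IsHermitian) :
    star (hA.eigenvectorUnitary : Matrix n n ℂ) * A * (hA.eigenvectorUnitary : Matrix n n ℂ)
      = Matrix.diagonal (RCLike.ofReal ∘ hA.eigenvalues) := by
  have h1 : star (hA.eigenvectorUnitary : Matrix n n ℂ) * (hA.eigenvectorUnitary : Matrix n n ℂ)
      = 1 := Unitary.coe_star_mul_self hA.eigenvectorUnitary
  have h2 := congrArg (fun M => star (hA.eigenvectorUnitary : Matrix n n ℂ) * M *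
    (hA.eigenvectorUnitary : Matrix n n ℂ)) (cfcHerm_id hA).symm
  rw [h2, cfcHerm_of_isHermitian hA]
  simp only [Matrix.mul_assoc]
  rw [h1, Matrix.mul_one, ← Matrix.mul_assoc, h1, Matrix.one_mul]; rfl

lemma msqrt_of_posSemidef {A : Matrix n n ℂ} (hA : A.PosSemidef) :
    msqrt A = cfcHerm A Real.sqrt := by
  rw [msqrt, dif_pos hA, cfcHerm_of_isHermitian hA.1]; rfl

lemma msqrt_posSemidef {A : Matrix n n ℂ} (hA : A.PosSemidef) : (msqrt A).PosSemidef := by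
  rw [msqrt_of_posSemidef hA]; exact cfcHerm_posSemidef hA.1 Real.sqrt_nonneg

lemma msqrt_mul_self {A : Matrix n n ℂ} (hA : A.PosSemidef) : msqrt A * msqrt A = A := by
  rw [msqrt_of_posSemidef hA, cfcHerm_mul hA.1]
  conv_rhs => rw [← cfcHerm_id hA.1]
  rw [cfcHerm_of_isHermitian hA.1, cfcHerm_of_isHermitian hA.1]
  congr 3; funext i; rw [Real.mul_self_sqrt (hA.eigenvalues_nonneg i)]

/-- diagonal entry of a PSD matrix is nonneg -/
lemma posSemidef_diag_nonneg {A : Matrix n n ℂ} (hA : A.PosSemidef) (i : n) :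
    0 ≤ A i i := by
  exact hA.diag_nonneg

lemma posSemidef_conj_diag_nonneg {A : Matrix n n ℂ} (hA : A.PosSemidef)
    (U : Matrix n n ℂ) (i : n) : 0 ≤ (star U * A * U) i i := by
  have h : (Uᴴ * A * U).PosSemidef := hA.conjTranspose_mul_mul_same U
  rw [Matrix.star_eq_conjTranspose]
  exact posSemidef_diag_nonneg h i

lemma conj_diag_one {U : Matrix n n ℂ} (hU : star U * U = 1) (i : n) :
    (star U * (1 : Matrix n n ℂ) * U) i i = 1 := by
  rw [Matrix.mul_one, hU, Matrix.one_apply_eq]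

lemma trace_conj {U M : Matrix n n ℂ} (hU : U * star U = 1) :
    (star U * M * U).trace = M.trace := by
  rw [Matrix.trace_mul_cycle, hU, Matrix.one_mul]

lemma re_nonneg_of_nonneg {z : ℂ} (h : 0 ≤ z) : 0 ≤ z.re := (Complex.nonneg_iff.mp h).1

lemma ps_core {Q R : Matrix n n ℂ} (hQ : Q.PosSemidef) (hR : R.PosSemidef)
    (hD : (Q - R).IsHermitian) :
    (((msqrt Q - msqrt R) * (msqrt Q - msqrt R)).trace).re ≤ ∑ i, |hD.eigenvalues i| := by
  set S : Matrix n n ℂ := msqrt Q - msqrt R with hSdef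
  set T : Matrix n n ℂ := msqrt Q + msqrt R with hTdef
  have hS : S.IsHermitian := ((msqrt_posSemidef hQ).isHermitian).sub ((msqrt_posSemidef hR).isHermitian)
  set U := (hS.eigenvectorUnitary : Matrix n n ℂ) with hUdef
  have hUU : star U * U = 1 := Unitary.coe_star_mul_self hS.eigenvectorUnitary
  have hUdiag : star U * S * U = Matrix.diagonal (RCLike.ofReal ∘ hS.eigenvalues) :=
    hS.star_mul_self_mul_eq_diagonal
  set sgnf : ℝ → ℝ := fun x => if x < 0 then (-1:ℝ) else 1 with hsgnf
  set W : Matrix n n ℂ := cfcHerm S sgnf with hWdef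
  -- Step A : tr(S*S).re ≤ tr(|S| * T).re
  have hTS_psd : (T - S).PosSemidef := by
    have : T - S = msqrt R + msqrt R := by rw [hTdef, hSdef]; abel
    rw [this]; exact (msqrt_posSemidef hR).add (msqrt_posSemidef hR)
  have hTaS_psd : (T + S).PosSemidef := by
    have : T + S = msqrt Q + msqrt Q := by rw [hTdef, hSdef]; abel
    rw [this]; exact (msqrt_posSemidef hQ).add (msqrt_posSemidef hQ)
  have hstep1 : ((S * S).trace).re ≤ ((cfcHerm S (fun x => |x|) * T).trace).re := by
    have e1 : (S * S).trace = ∑ i, ((hS.eigenvalues i : ℂ)) * ((star U * S * U) i i) := by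
      conv_lhs => rw [show S * S = cfcHerm S (fun x => x) * S from by rw [cfcHerm_id hS]]
      exact trace_cfcHerm_mul hS _ S
    have e2 : ∀ i, (star U * S * U) i i = ((hS.eigenvalues i : ℂ)) := by
      intro i; rw [hUdiag]; simp [Matrix.diagonal]
    have e3 : (cfcHerm S (fun x => |x|) * T).trace
        = ∑ i, ((|hS.eigenvalues i| : ℝ) : ℂ) * ((star U * T * U) i i) :=
      trace_cfcHerm_mul hS _ T
    rw [e1, e3, Complex.re_sum, Complex.re_sum]
    apply Finset.sum_le_sum
    intro i _
    have habs : |hS.eigenvalues i| ≤ ((star U * T * U) i i).re := by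
      have h1 : 0 ≤ ((star U * (T - S) * U) i i).re :=
        re_nonneg_of_nonneg (posSemidef_conj_diag_nonneg hTS_psd U i)
      have h2 : 0 ≤ ((star U * (T + S) * U) i i).re :=
        re_nonneg_of_nonneg (posSemidef_conj_diag_nonneg hTaS_psd U i)
      have hsub : star U * (T - S) * U = star U * T * U - star U * S * U := by
        rw [Matrix.mul_sub, Matrix.sub_mul]
      have hadd : star U * (T + S) * U = star U * T * U + star U * S * U := by
        rw [Matrix.mul_add, Matrix.add_mul]
      rw [hsub] at h1; rw [hadd] at h2
      rw [Matrix.sub_apply] at h1; rw [Matrix.add_apply] at h2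
      rw [e2 i] at h1 h2
      simp only [Complex.sub_re, Complex.add_re, Complex.ofReal_re] at h1 h2
      rw [abs_le]; constructor <;> linarith
    rw [e2 i]
    simp only [Complex.re_ofReal_mul, Complex.ofReal_re]
    calc hS.eigenvalues i * hS.eigenvalues i = |hS.eigenvalues i| * |hS.eigenvalues i| :=
            (abs_mul_abs_self _).symm
      _ ≤ |hS.eigenvalues i| * ((star U * T * U) i i).re := by
            exact mul_le_mul_of_nonneg_left habs (abs_nonneg _)
  -- Step B : tr(|S| * T) = tr(W * (Q - R))
  have habs_eq : (fun x : ℝ => sgnf x * x) = fun x : ℝ => |x| := by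
    funext x
    by_cases h : x < 0
    · simp only [hsgnf, if_pos h, abs_of_neg h]; ring
    · simp only [hsgnf, if_neg h, abs_of_nonneg (le_of_not_gt h), one_mul]
  have habs_eq' : (fun x : ℝ => x * sgnf x) = fun x : ℝ => |x| := by
    funext x
    rw [mul_comm]
    exact congrFun habs_eq x
  have hWS : W * S = cfcHerm S (fun x => |x|) := by
    conv_lhs => rw [show S = cfcHerm S (fun x => x) from (cfcHerm_id hS).symm]
    rw [hWdef, cfcHerm_mul hS, habs_eq]
  have hSW : S * W = cfcHerm S (fun x => |x|) := by
    conv_lhs => rw [show S = cfcHerm S (fun x => x) from (cfcHerm_id hS).symm]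
    rw [hWdef, cfcHerm_mul hS, habs_eq']
  have hSTTS : S * T + T * S = (Q - R) + (Q - R) := by
    have h1 : S * T = Q - R + (msqrt Q * msqrt R - msqrt R * msqrt Q) := by
      rw [hSdef, hTdef, Matrix.sub_mul, Matrix.mul_add, Matrix.mul_add,
        msqrt_mul_self hQ, msqrt_mul_self hR]
      abel
    have h2 : T * S = Q - R - (msqrt Q * msqrt R - msqrt R * msqrt Q) := by
      rw [hSdef, hTdef, Matrix.add_mul, Matrix.mul_sub, Matrix.mul_sub,
        msqrt_mul_self hQ, msqrt_mul_self hR]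
      abel
    rw [h1, h2]; abel
  have hstepB : (cfcHerm S (fun x => |x|) * T).trace = (W * (Q - R)).trace := by
    have h3 : (W * (S * T)).trace = (cfcHerm S (fun x => |x|) * T).trace := by
      rw [← Matrix.mul_assoc, hWS]
    have h4 : (W * (T * S)).trace = (cfcHerm S (fun x => |x|) * T).trace := by
      rw [← Matrix.mul_assoc, Matrix.trace_mul_cycle, hSW]
    have h2 : (W * (Q - R)).trace + (W * (Q - R)).trace
        = (cfcHerm S (fun x => |x|) * T).trace + (cfcHerm S (fun x => |x|) * T).trace := by
      rw [← Matrix.trace_add, ← Matrix.mul_add, ← hSTTS, Matrix.mul_add, Matrix.trace_add, h3, h4]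
    linear_combination -h2 / 2
  -- Step C : tr(W * (Q - R)).re ≤ ∑ |δ i|
  have hstepC : ((W * (Q - R)).trace).re ≤ ∑ i, |hD.eigenvalues i| := by
    set V := (hD.eigenvectorUnitary : Matrix n n ℂ) with hVdef
    have hVV : star V * V = 1 := Unitary.coe_star_mul_self hD.eigenvectorUnitary
    have e1 : (W * (Q - R)).trace = ((Q - R) * W).trace := Matrix.trace_mul_comm _ _
    have e2 : ((Q - R) * W).trace = ∑ i, ((hD.eigenvalues i : ℂ)) * ((star V * W * V) i i) := by
      conv_lhs => rw [show (Q - R) = cfcHerm (Q - R) (fun x => x) from (cfcHerm_id hD).symm]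
      exact trace_cfcHerm_mul hD _ W
    rw [e1, e2, Complex.re_sum]
    apply Finset.sum_le_sum
    intro i _
    have hw_le : ((star V * W * V) i i).re ≤ 1 := by
      have hpsd : ((1 : Matrix n n ℂ) - W).PosSemidef := by
        have : (1 : Matrix n n ℂ) - W = cfcHerm S (fun x => 1 - sgnf x) := by
          rw [cfcHerm_sub hS, cfcHerm_one hS]
        rw [this]
        exact cfcHerm_posSemidef hS fun x => by rw [hsgnf]; by_cases h : x < 0 <;> simp [h] <;> norm_num
      have := re_nonneg_of_nonneg (posSemidef_conj_diag_nonneg hpsd V i)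
      rw [Matrix.mul_sub, Matrix.sub_mul, Matrix.sub_apply] at this
      rw [conj_diag_one hVV] at this
      simp only [Complex.sub_re, Complex.one_re] at this
      linarith
    have hw_ge : -1 ≤ ((star V * W * V) i i).re := by
      have hpsd : ((1 : Matrix n n ℂ) + W).PosSemidef := by
        have : (1 : Matrix n n ℂ) + W = cfcHerm S (fun x => 1 - (- sgnf x)) := by
          rw [cfcHerm_sub hS, cfcHerm_one hS]
          have : cfcHerm S (fun x => - sgnf x) = cfcHerm S (fun x => 0 - sgnf x) := by norm_num
          rw [this, cfcHerm_sub hS, hWdef]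
          have h0 : cfcHerm S (fun _ => (0:ℝ)) = (0 : Matrix n n ℂ) := by
            rw [cfcHerm_of_isHermitian hS]
            simp
          rw [h0]
          abel
        rw [this]
        exact cfcHerm_posSemidef hS fun x => by rw [hsgnf]; by_cases h : x < 0 <;> simp [h] <;> norm_num
      have := re_nonneg_of_nonneg (posSemidef_conj_diag_nonneg hpsd V i)
      rw [Matrix.mul_add, Matrix.add_mul, Matrix.add_apply] at this
      rw [conj_diag_one hVV] at this
      simp only [Complex.add_re, Complex.one_re] at this
      linarith
    simp only [Complex.re_ofReal_mul]
    calc hD.eigenvalues i * ((star V * W * V) i i).re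
        ≤ |hD.eigenvalues i * ((star V * W * V) i i).re| := le_abs_self _
      _ = |hD.eigenvalues i| * |((star V * W * V) i i).re| := abs_mul _ _
      _ ≤ |hD.eigenvalues i| * 1 := by
          apply mul_le_mul_of_nonneg_left _ (abs_nonneg _)
          rw [abs_le]; exact ⟨hw_ge, hw_le⟩
      _ = |hD.eigenvalues i| := mul_one _
  calc ((S * S).trace).re ≤ ((cfcHerm S (fun x => |x|) * T).trace).re := hstep1
    _ = ((W * (Q - R)).trace).re := by rw [hstepB]
    _ ≤ ∑ i, |hD.eigenvalues i| := hstepC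


lemma key_ineq {Q R : Matrix n n ℂ} (hQ : Q.PosSemidef) (hR : R.PosSemidef) :
    ((negProj (Q - R) * Q).trace).re ≤ ((msqrt Q * msqrt R).trace).re := by
  have hD : (Q - R).IsHermitian := hQ.isHermitian.sub hR.isHermitian
  set V := (hD.eigenvectorUnitary : Matrix n n ℂ) with hVdef
  have hVV : V * star V = 1 :=
    (Matrix.mem_unitaryGroup_iff).mp hD.eigenvectorUnitary.2
  have hVdiag : star V * (Q - R) * V = Matrix.diagonal (RCLike.ofReal ∘ hD.eigenvalues) :=
    hD.star_mul_self_mul_eq_diagonal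
  set q : n → ℂ := fun i => (star V * Q * V) i i with hqdef
  set r : n → ℂ := fun i => (star V * R * V) i i with hrdef
  have hqr : ∀ i, (q i).re - (r i).re = hD.eigenvalues i := by
    intro i
    have h1 : star V * (Q - R) * V = star V * Q * V - star V * R * V := by
      rw [Matrix.mul_sub, Matrix.sub_mul]
    have := congrFun (congrFun (h1.symm.trans hVdiag) i) i
    rw [Matrix.sub_apply] at this
    have h2 : (q i - r i) = ((hD.eigenvalues i : ℝ) : ℂ) := by
      rw [hqdef, hrdef]; simpa [Matrix.diagonal] using this
    have := congrArg Complex.re h2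
    simpa using this
  have hq0 : ∀ i, 0 ≤ (q i).re := fun i =>
    re_nonneg_of_nonneg (posSemidef_conj_diag_nonneg hQ V i)
  have hr0 : ∀ i, 0 ≤ (r i).re := fun i =>
    re_nonneg_of_nonneg (posSemidef_conj_diag_nonneg hR V i)
  -- trace formulas
  have hlhs : ((negProj (Q - R) * Q).trace).re
      = ∑ i, (if hD.eigenvalues i < 0 then (1:ℝ) else 0) * (q i).re := by
    have : negProj (Q - R) = cfcHerm (Q - R) (fun x => if x < 0 then 1 else 0) := rfl
    rw [this, trace_cfcHerm_mul hD _ Q, Complex.re_sum]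
    exact Finset.sum_congr rfl fun i _ => by rw [Complex.re_ofReal_mul]
  have htrq : ∑ i, (q i).re = (Q.trace).re := by
    rw [← Complex.re_sum]
    congr 1
    have : ∑ i, q i = (star V * Q * V).trace := by rw [Matrix.trace]; rfl
    rw [this, trace_conj hVV]
  have htrr : ∑ i, (r i).re = (R.trace).re := by
    rw [← Complex.re_sum]
    congr 1
    have : ∑ i, r i = (star V * R * V).trace := by rw [Matrix.trace]; rfl
    rw [this, trace_conj hVV]
  -- Powers-Stormer
  have hSS : (((msqrt Q - msqrt R) * (msqrt Q - msqrt R)).trace).re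
      = (Q.trace).re + (R.trace).re - 2 * ((msqrt Q * msqrt R).trace).re := by
    have hexp : (msqrt Q - msqrt R) * (msqrt Q - msqrt R)
        = Q + R - (msqrt Q * msqrt R) - (msqrt R * msqrt Q) := by
      rw [Matrix.sub_mul, Matrix.mul_sub, Matrix.mul_sub,
        msqrt_mul_self hQ, msqrt_mul_self hR]
      abel
    rw [hexp]
    have hcomm : ((msqrt R * msqrt Q).trace) = ((msqrt Q * msqrt R).trace) :=
      Matrix.trace_mul_comm _ _
    rw [Matrix.trace_sub, Matrix.trace_sub, Matrix.trace_add, hcomm]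
    simp only [Complex.sub_re, Complex.add_re]
    ring
  have hps := ps_core hQ hR hD
  rw [hSS] at hps
  -- key counting identity
  have hcount : ∀ i, 2 * ((if hD.eigenvalues i < 0 then (1:ℝ) else 0) * (q i).re
        + (if 0 ≤ hD.eigenvalues i then (1:ℝ) else 0) * (r i).re)
      = (q i).re + (r i).re - |hD.eigenvalues i| := by
    intro i
    by_cases h : hD.eigenvalues i < 0
    · rw [if_pos h, if_neg (not_le.mpr h), abs_of_neg h]
      have := hqr i
      linarith
    · rw [if_neg h, if_pos (le_of_not_gt h), abs_of_nonneg (le_of_not_gt h)]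
      have := hqr i
      linarith
  have hsum2 : 2 * (∑ i, (if hD.eigenvalues i < 0 then (1:ℝ) else 0) * (q i).re
        + ∑ i, (if 0 ≤ hD.eigenvalues i then (1:ℝ) else 0) * (r i).re)
      = (Q.trace).re + (R.trace).re - ∑ i, |hD.eigenvalues i| := by
    rw [← Finset.sum_add_distrib, Finset.mul_sum]
    rw [show (Q.trace).re + (R.trace).re - ∑ i, |hD.eigenvalues i|
        = ∑ i, ((q i).re + (r i).re - |hD.eigenvalues i|) by
      rw [Finset.sum_sub_distrib, Finset.sum_add_distrib, htrq, htrr]]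
    exact Finset.sum_congr rfl fun i _ => hcount i
  have hpos : 0 ≤ ∑ i, (if 0 ≤ hD.eigenvalues i then (1:ℝ) else 0) * (r i).re :=
    Finset.sum_nonneg fun i _ => mul_nonneg (by positivity) (hr0 i)
  rw [hlhs]
  linarith


lemma re_trace_le_traceNorm (X : Matrix n n ℂ) : (X.trace).re ≤ traceNorm X := by
  have hXX : (Xᴴ * X).PosSemidef := Matrix.posSemidef_conjTranspose_mul_self X
  set P : Matrix n n ℂ := msqrt (Xᴴ * X) with hPdef
  have hP : P.PosSemidef := msqrt_posSemidef hXX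
  have hPh : P.IsHermitian := hP.isHermitian
  set U := (hPh.eigenvectorUnitary : Matrix n n ℂ) with hUdef
  have hUU : U * star U = 1 := (Matrix.mem_unitaryGroup_iff).mp hPh.eigenvectorUnitary.2
  have hUU' : star U * U = 1 := Unitary.coe_star_mul_self hPh.eigenvectorUnitary
  have htn : traceNorm X = ∑ i, hPh.eigenvalues i := by
    have h1 : P.trace = (star U * P * U).trace := (trace_conj hUU).symm
    have h2 : star U * P * U = Matrix.diagonal (RCLike.ofReal ∘ hPh.eigenvalues) :=
      hPh.star_mul_self_mul_eq_diagonal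
    have : traceNorm X = (P.trace).re := rfl
    rw [this, h1, h2, Matrix.trace_diagonal, Complex.re_sum]
    rfl
  have htr : (X.trace).re = ∑ i, ((star U * X * U) i i).re := by
    rw [← trace_conj (M := X) hUU, Matrix.trace, Complex.re_sum]; rfl
  rw [htn, htr]
  apply Finset.sum_le_sum
  intro i _
  -- the i-th eigenvector
  set u : n → ℂ := ⇑(hPh.eigenvectorBasis i) with hudef
  have hentry : (star U * X * U) i i = dotProduct (star u) (X *ᵥ u) := by
    simp only [Matrix.mul_apply, dotProduct, Matrix.mulVec, Matrix.star_apply,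
      hUdef, Matrix.IsHermitian.eigenvectorUnitary_apply, hudef, dotProduct,
      Pi.star_apply, Finset.sum_mul, Finset.mul_sum]
    rw [Finset.sum_comm]
    apply Finset.sum_congr rfl; intro j _
    apply Finset.sum_congr rfl; intro k _
    ring
  have huu : dotProduct (star u) u = 1 := by
    have := congrFun (congrFun hUU' i) i
    simp only [Matrix.mul_apply, Matrix.star_apply, Matrix.one_apply_eq] at this
    simpa [dotProduct, hudef, hUdef, Matrix.IsHermitian.eigenvectorUnitary_apply] using this
  have hXu : dotProduct (star (X *ᵥ u)) (X *ᵥ u)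
      = ((hPh.eigenvalues i : ℂ)) * ((hPh.eigenvalues i : ℂ)) := by
    rw [Matrix.star_mulVec, ← Matrix.dotProduct_mulVec, Matrix.mulVec_mulVec]
    have h3 : Xᴴ * X = P * P := (msqrt_mul_self hXX).symm
    rw [h3, ← Matrix.mulVec_mulVec]
    rw [show P *ᵥ u = hPh.eigenvalues i • u from hPh.mulVec_eigenvectorBasis i]
    rw [Matrix.mulVec_smul]
    rw [show P *ᵥ u = hPh.eigenvalues i • u from hPh.mulVec_eigenvectorBasis i]
    rw [dotProduct_smul, dotProduct_smul, huu]
    simp [Complex.real_smul]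
  -- inner product formulation
  set a : EuclideanSpace ℂ n := (WithLp.equiv 2 (n → ℂ)).symm u with hadef
  set bb : EuclideanSpace ℂ n := (WithLp.equiv 2 (n → ℂ)).symm (X *ᵥ u) with hbdef
  have hinner : inner ℂ a bb = dotProduct (star u) (X *ᵥ u) :=
    (EuclideanSpace.inner_toLp_toLp u (X *ᵥ u)).trans (dotProduct_comm _ _)
  have hna : ‖a‖ = 1 := by
    have : a = hPh.eigenvectorBasis i := rfl
    rw [this]
    exact hPh.eigenvectorBasis.orthonormal.1 i
  have hnb : ‖bb‖ = hPh.eigenvalues i := by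
    have h5 : (inner ℂ bb bb) = ((hPh.eigenvalues i : ℂ)) * ((hPh.eigenvalues i : ℂ)) := by
      rw [show inner ℂ bb bb = dotProduct (star (X *ᵥ u)) (X *ᵥ u) from
        (EuclideanSpace.inner_toLp_toLp _ _).trans (dotProduct_comm _ _)]
      exact hXu
    have h6 := inner_self_eq_norm_sq_to_K (𝕜 := ℂ) bb
    rw [h5] at h6
    have h7 : ‖bb‖ ^ 2 = hPh.eigenvalues i * hPh.eigenvalues i := by
      have h6' : (RCLike.ofReal (hPh.eigenvalues i * hPh.eigenvalues i) : ℂ)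
          = RCLike.ofReal (‖bb‖ ^ 2) := by
        push_cast
        exact h6
      exact (RCLike.ofReal_injective h6').symm
    have h8 : 0 ≤ hPh.eigenvalues i := hP.eigenvalues_nonneg i
    rw [← Real.sqrt_sq (norm_nonneg bb), h7, Real.sqrt_mul_self h8]
  calc ((star U * X * U) i i).re = (inner ℂ a bb).re := by rw [hinner, hentry]
    _ ≤ ‖(inner ℂ a bb)‖ := Complex.re_le_norm _
    _ = ‖(inner ℂ a bb)‖ := rfl
    _ ≤ ‖a‖ * ‖bb‖ := norm_inner_le_norm a bb
    _ = hPh.eigenvalues i := by rw [hna, hnb, one_mul]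

open Kronecker in
lemma kron_one_posSemidef {a b : Type*} [Fintype a] [Fintype b] [DecidableEq a] [DecidableEq b]
    {σ : Matrix b b ℂ} (hσ : σ.PosSemidef) :
    ((1 : Matrix a a ℂ) ⊗ₖ σ).PosSemidef := by
  exact Matrix.PosSemidef.one.kronecker hσ

lemma posSemidef_real_smul {A : Matrix n n ℂ} (hA : A.PosSemidef) {c : ℝ} (hc : 0 ≤ c) :
    (((c : ℂ)) • A).PosSemidef := by
  exact hA.smul (Complex.zero_le_real.mpr hc)

lemma msqrt_real_smul {A : Matrix n n ℂ} (hA : A.PosSemidef) {c : ℝ} (hc : 0 ≤ c) :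
    msqrt (((c : ℂ)) • A) = ((Real.sqrt c : ℂ)) • msqrt A := by
  have hcA : (((c : ℂ)) • A).PosSemidef := posSemidef_real_smul hA hc
  have hcand : (((Real.sqrt c : ℂ)) • msqrt A).PosSemidef :=
    posSemidef_real_smul (msqrt_posSemidef hA) (Real.sqrt_nonneg c)
  have hsq : (((Real.sqrt c : ℂ)) • msqrt A) ^ 2 = ((c : ℂ)) • A := by
    rw [sq, Matrix.smul_mul, Matrix.mul_smul, smul_smul, msqrt_mul_self hA]
    congr 1
    rw [← Complex.ofReal_mul, Real.mul_self_sqrt hc]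
  have key : ∀ {B : Matrix n n ℂ} (hB : B.IsHermitian) (f : ℝ → ℝ), cfcHerm B f = cfc f B := by
    intro B hB f
    rw [cfcHerm_of_isHermitian hB, hB.cfc_eq, Matrix.IsHermitian.cfc, Unitary.conjStarAlgAut_apply]; rfl
  have hsm : ∀ (r : ℝ) (M : Matrix n n ℂ), (r : ℂ) • M = r • M := fun r M => by
    ext i j; simp [Complex.real_smul]
  rw [msqrt_of_posSemidef hcA, msqrt_of_posSemidef hA, key hcA.1, key hA.1, hsm c A,
    hsm (Real.sqrt c), ← cfc_comp_smul c Real.sqrt A (ha := hA.1.isSelfAdjoint)]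
  simp only [smul_eq_mul, Real.sqrt_mul hc]
  exact cfc_const_mul _ _ _

end QIT

open QIT in
/-- `‖√ρ_AB √(1_A ⊗ σ_B)‖₁ · 2^{-λ/2} ≥ tr[P⁻ ρ_AB]` where `P⁻` projects onto the strictly
negative eigenspace of `ρ_AB - 2^{-λ}(1_A ⊗ σ_B)`. -/
theorem stmt13 {a b : Type*} [Fintype a] [Fintype b] [DecidableEq a] [DecidableEq b]
    (l : ℝ) (hl : 0 ≤ l)
    (ρ : Matrix (a × b) (a × b) ℂ) (hρ : SubNormalized ρ)
    (σ : Matrix b b ℂ) (hσ : SubNormalized σ) :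
    traceNorm (msqrt ρ * msqrt ((1 : Matrix a a ℂ) ⊗ₖ σ)) * (2 : ℝ) ^ (-(l / 2)) ≥
      ((negProj (ρ - (((2 : ℝ) ^ (-l) : ℝ)) • ((1 : Matrix a a ℂ) ⊗ₖ σ)) * ρ).trace).re := by
  obtain ⟨hρpsd, -⟩ := hρ
  obtain ⟨hσpsd, -⟩ := hσ
  have hτ : ((1 : Matrix a a ℂ) ⊗ₖ σ).PosSemidef := kron_one_posSemidef hσpsd
  have hc : (0:ℝ) ≤ (2:ℝ) ^ (-l) := le_of_lt (Real.rpow_pos_of_pos two_pos _)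
  have hsmul : (((2:ℝ) ^ (-l) : ℝ)) • ((1 : Matrix a a ℂ) ⊗ₖ σ)
      = ((((2:ℝ) ^ (-l) : ℝ) : ℂ)) • ((1 : Matrix a a ℂ) ⊗ₖ σ) := by
    ext i j
    simp [Complex.real_smul]
  have hR : (((((2:ℝ) ^ (-l) : ℝ) : ℂ)) • ((1 : Matrix a a ℂ) ⊗ₖ σ)).PosSemidef :=
    posSemidef_real_smul hτ hc
  have hkey := key_ineq hρpsd hR
  have hsqrt2 : Real.sqrt ((2:ℝ)^(-l)) = (2:ℝ) ^ (-(l/2)) := by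
    rw [Real.sqrt_eq_rpow, ← Real.rpow_mul (by norm_num : (0:ℝ) ≤ 2)]
    congr 1
    ring
  have hms : msqrt (((((2:ℝ) ^ (-l) : ℝ) : ℂ)) • ((1 : Matrix a a ℂ) ⊗ₖ σ))
      = ((((2:ℝ) ^ (-(l/2)) : ℝ) : ℂ)) • msqrt ((1 : Matrix a a ℂ) ⊗ₖ σ) := by
    rw [msqrt_real_smul hτ hc, hsqrt2]
  have htr : ((msqrt ρ * msqrt (((((2:ℝ) ^ (-l) : ℝ) : ℂ)) • ((1 : Matrix a a ℂ) ⊗ₖ σ))).trace).re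
      = (2:ℝ)^(-(l/2)) * ((msqrt ρ * msqrt ((1 : Matrix a a ℂ) ⊗ₖ σ)).trace).re := by
    rw [hms, Matrix.mul_smul, Matrix.trace_smul, smul_eq_mul, Complex.re_ofReal_mul]
  have hfinal := re_trace_le_traceNorm (msqrt ρ * msqrt ((1 : Matrix a a ℂ) ⊗ₖ σ))
  have hpos : (0:ℝ) ≤ (2:ℝ) ^ (-(l/2)) := le_of_lt (Real.rpow_pos_of_pos two_pos _)
  rw [ge_iff_le, hsmul]
  calc ((negProj (ρ - ((((2:ℝ) ^ (-l) : ℝ) : ℂ)) • ((1 : Matrix a a ℂ) ⊗ₖ σ)) * ρ).trace).re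
      ≤ ((msqrt ρ * msqrt (((((2:ℝ) ^ (-l) : ℝ) : ℂ)) • ((1 : Matrix a a ℂ) ⊗ₖ σ))).trace).re := hkey
    _ = (2:ℝ)^(-(l/2)) * ((msqrt ρ * msqrt ((1 : Matrix a a ℂ) ⊗ₖ σ)).trace).re := htr
    _ ≤ (2:ℝ)^(-(l/2)) * traceNorm (msqrt ρ * msqrt ((1 : Matrix a a ℂ) ⊗ₖ σ)) :=
        mul_le_mul_of_nonneg_left hfinal hpos
    _ = traceNorm (msqrt ρ * msqrt ((1 : Matrix a a ℂ) ⊗ₖ σ)) * (2:ℝ)^(-(l/2)) := mul_comm _ _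
end
end
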